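/- arXiv:1406.7166 — 9 statements merged into one kernel-verified Lean document; each statement's English description precedes it below -/
import Mathlib

section
/- If a nontrivial linearly ordered, bounded, integral, commutative residuated lattice (an MTL-chain) A with more than two elements satisfies x * x = 0 for all x < 1, then A has a coatom, i.e., a greatest element strictly below 1. -/
/-- An MTL-chain: a linearly ordered, bounded, integral, commutative
residuated lattice. -/
structure MTLChain (α : Type*) [LinearOrder α] [Zero α] [One α] where
  zero_le : ∀ x : α, 0 ≤ x
  le_one : ∀ x : α, x ≤ 1
  mul : α → α → α
  imp : α → α → α
  mul_comm : ∀ x y, mul x y = mul y x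
  mul_assoc : ∀ x y z, mul (mul x y) z = mul x (mul y z)
  mul_one : ∀ x, mul x 1 = x
  mul_le_mul : ∀ x y z : α, x ≤ y → mul x z ≤ mul y z
  residuation : ∀ x y z : α, mul x y ≤ z ↔ x ≤ imp y z

/-- A nontrivial MTL-chain with more than two elements in which `x * x = 0`
for all `x < 1` has a coatom. -/
theorem mtlChain_sq_zero_has_coatom {α : Type*} [LinearOrder α] [Zero α] [One α]
    (M : MTLChain α)
    (hnt : (0 : α) ≠ 1)
    (hbig : ∃ a : α, a ≠ 0 ∧ a ≠ 1)
    (hsq : ∀ x : α, x < 1 → M.mul x x = 0) :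
    ∃ c : α, c < 1 ∧ ∀ x : α, x < 1 → x ≤ c := by
  obtain ⟨a, ha0, ha1⟩ := hbig
  have halt1 : a < 1 := lt_of_le_of_ne (M.le_one a) ha1
  refine ⟨M.imp a 0, ?_, ?_⟩
  · rcases lt_or_eq_of_le (M.le_one (M.imp a 0)) with h | h
    · exact h
    · exfalso
      have h1 : M.mul 1 a ≤ 0 := (M.residuation 1 a 0).2 (ge_of_eq h)
      have : a ≤ 0 := by
        rwa [M.mul_comm, M.mul_one] at h1
      exact ha0 (le_antisymm this (M.zero_le a))
  · intro x hx
    have hxa : M.mul x a ≤ 0 := by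
      rcases le_total x a with h | h
      · calc M.mul x a ≤ M.mul a a := M.mul_le_mul x a a h
          _ = 0 := hsq a halt1
      · calc M.mul x a = M.mul a x := M.mul_comm x a
          _ ≤ M.mul x x := M.mul_le_mul a x x h
          _ = 0 := hsq x hx
    exact (M.residuation x a 0).1 hxa
end

section
/- In a DP-chain A (an MTL-chain with a coatom c such that x * x = 0 for all x < 1), the operations are uniquely determined: x * y = 0 if x, y < 1 and x * y = min(x,y) otherwise; and x ⇒ y = 1 if x ≤ y, x ⇒ y = c if 1 > x > y, and x ⇒ y = y if x = 1. -/
/-- A DP-chain: an MTL-chain (linearly ordered, bounded, integral, commutative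
residuated lattice) with a coatom, in which `x * x = 0` for all `x < 1`. -/
structure DPChain (α : Type*) [LinearOrder α] [Zero α] [One α] where
  zero_le : ∀ x : α, 0 ≤ x
  le_one : ∀ x : α, x ≤ 1
  mul : α → α → α
  imp : α → α → α
  mul_comm : ∀ x y, mul x y = mul y x
  mul_assoc : ∀ x y z, mul (mul x y) z = mul x (mul y z)
  mul_one : ∀ x, mul x 1 = x
  mul_le_mul : ∀ x y z : α, x ≤ y → mul x z ≤ mul y z
  residuation : ∀ x y z : α, mul x y ≤ z ↔ x ≤ imp y z
  coatom : α
  coatom_lt_one : coatom < 1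
  le_coatom : ∀ x : α, x < 1 → x ≤ coatom
  mul_self_eq_zero : ∀ x : α, x < 1 → mul x x = 0

/-- In a DP-chain the operations are uniquely determined by the order. -/
theorem dpChain_operations {α : Type*} [LinearOrder α] [Zero α] [One α]
    (M : DPChain α) :
    (∀ x y : α, M.mul x y = if x < 1 ∧ y < 1 then 0 else min x y) ∧
    (∀ x y : α, M.imp x y =
      if x ≤ y then 1 else if x = 1 then y else M.coatom) := by
  have one_mul : ∀ x : α, M.mul 1 x = x := fun x => by
    rw [M.mul_comm]; exact M.mul_one x
  constructor
  · intro x y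
    split_ifs with h
    · obtain ⟨hx, hy⟩ := h
      apply le_antisymm _ (M.zero_le _)
      rcases le_total x y with hxy | hxy
      · calc M.mul x y ≤ M.mul y y := M.mul_le_mul x y y hxy
          _ = 0 := M.mul_self_eq_zero y hy
      · calc M.mul x y ≤ M.mul x x := by rw [M.mul_comm x y]; exact M.mul_le_mul y x x hxy
          _ = 0 := M.mul_self_eq_zero x hx
    · push_neg at h
      rcases lt_or_ge x 1 with hx | hx
      · have hy : y = 1 := le_antisymm (M.le_one y) (h hx)
        rw [hy, M.mul_one]
        rw [min_eq_left (M.le_one x)]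
      · have hx1 : x = 1 := le_antisymm (M.le_one x) hx
        rw [hx1, one_mul, min_eq_right (M.le_one y)]
  · intro x y
    split_ifs with h h1
    · apply le_antisymm (M.le_one _)
      rw [← M.residuation, one_mul]; exact h
    · subst h1
      apply le_antisymm
      · have := (M.residuation (M.imp 1 y) 1 y).mpr le_rfl
        rwa [M.mul_one] at this
      · rw [← M.residuation, M.mul_one]
    · have hx : x < 1 := lt_of_le_of_ne (M.le_one x) h1
      apply le_antisymm
      · apply M.le_coatom
        by_contra hc
        push_neg at hc
        have := (M.residuation 1 x y).mpr hc
        rw [one_mul] at this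
        exact h this
      · rw [← M.residuation]
        calc M.mul M.coatom x ≤ M.mul M.coatom M.coatom := by
              rw [M.mul_comm M.coatom x, M.mul_comm M.coatom M.coatom]
              exact M.mul_le_mul x M.coatom M.coatom (M.le_coatom x hx)
          _ = 0 := M.mul_self_eq_zero _ M.coatom_lt_one
          _ ≤ y := M.zero_le y
end

section
/- In a DP-chain A whose coatom c satisfies c > 0, the coatom is the unique negation fixpoint: ¬c = c, where ¬x := x ⇒ 0, and no other element x satisfies ¬x = x. -/
/-- In a DP-chain whose coatom is positive, the coatom is the unique negation
fixpoint. -/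
theorem dpChain_coatom_unique_negation_fixpoint {α : Type*} [LinearOrder α] [Zero α] [One α]
    (M : DPChain α) (hc : 0 < M.coatom) :
    M.imp M.coatom 0 = M.coatom ∧
    ∀ x : α, M.imp x 0 = x → x = M.coatom := by
  have hcle : M.coatom ≤ M.imp M.coatom 0 := by
    rw [← M.residuation]
    exact le_of_eq (M.mul_self_eq_zero _ M.coatom_lt_one)
  have key : ∀ x : α, M.imp x 0 = x → x = M.coatom := by
    intro x hx
    have hx1 : x < 1 := by
      rcases lt_or_eq_of_le (M.le_one x) with h | h
      · exact h
      · exfalso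
        have h1 : (1:α) ≤ M.imp x 0 := le_of_le_of_eq h.ge hx.symm
        have h2 : M.mul 1 x ≤ 0 := (M.residuation 1 x 0).2 h1
        rw [M.mul_comm, M.mul_one] at h2
        have h3 : (1:α) ≤ 0 := h ▸ h2
        exact absurd (h3.trans_lt (hc.trans M.coatom_lt_one)) (lt_irrefl 1)
    have hxc : x ≤ M.coatom := M.le_coatom x hx1
    have hcx : M.coatom ≤ x := by
      rw [← hx, ← M.residuation]
      calc M.mul M.coatom x ≤ M.mul M.coatom M.coatom := by
            rw [M.mul_comm M.coatom x]
            exact M.mul_le_mul x M.coatom M.coatom hxc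
        _ = 0 := M.mul_self_eq_zero _ M.coatom_lt_one
    exact le_antisymm hxc hcx
  refine ⟨?_, key⟩
  have hlt1 : M.imp M.coatom 0 < 1 := by
    rcases lt_or_eq_of_le (M.le_one _) with h | h
    · exact h
    · exfalso
      have : M.mul 1 M.coatom ≤ 0 := (M.residuation 1 M.coatom 0).2 h.ge
      rw [M.mul_comm, M.mul_one] at this
      exact absurd this (not_le_of_gt hc)
  exact le_antisymm (M.le_coatom _ hlt1) hcle
end

section
/- An MTL-chain satisfies (x ∨ ¬(x*x)) = 1 for all x (the weakened excluded middle identity axiomatizing DP) if and only if it is trivial, or it is the two-element chain, or it has a coatom and satisfies x * x = 0 for all x < 1. -/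
/-- An MTL-chain satisfies the weakened excluded middle law
`x ∨ ¬(x*x) = 1` iff it is trivial, or the two-element chain, or it has a
coatom and satisfies `x * x = 0` for all `x < 1`. -/
theorem mtlChain_weak_em_characterization {α : Type*} [LinearOrder α] [Zero α] [One α]
    (M : MTLChain α) :
    (∀ x : α, max x (M.imp (M.mul x x) 0) = 1) ↔
      Subsingleton α ∨
      ((0 : α) ≠ 1 ∧ ∀ x : α, x = 0 ∨ x = 1) ∨
      ((∃ c : α, c < 1 ∧ ∀ x : α, x < 1 → x ≤ c) ∧
        ∀ x : α, x < 1 → M.mul x x = 0) := by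
  have mul_zero : ∀ x : α, M.mul x 0 = 0 := fun x =>
    le_antisymm
      (by
        have h1 : M.mul x 0 ≤ M.mul 1 0 := M.mul_le_mul x 1 0 (M.le_one x)
        rwa [M.mul_comm 1 0, M.mul_one] at h1)
      (M.zero_le _)
  have neg_one : ∀ y : α, M.imp y 0 = 1 ↔ y = 0 := by
    intro y
    constructor
    · intro h
      have h1 : M.mul 1 y ≤ 0 := (M.residuation 1 y 0).mpr (le_of_eq h.symm)
      rw [M.mul_comm, M.mul_one] at h1
      exact le_antisymm h1 (M.zero_le y)
    · intro h; subst h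
      exact le_antisymm (M.le_one _)
        ((M.residuation 1 0 0).mp (le_of_eq (mul_zero 1)))
  have key : (∀ x : α, max x (M.imp (M.mul x x) 0) = 1) ↔
      ∀ x : α, x = 1 ∨ M.mul x x = 0 := by
    constructor
    · intro h x
      rcases max_choice x (M.imp (M.mul x x) 0) with h' | h'
      · left; rw [← h']; exact h x
      · right; exact (neg_one _).mp (by rw [← h']; exact h x)
    · intro h x
      rcases h x with h' | h'
      · subst h'; exact max_eq_left (M.le_one _)
      · rw [h', (neg_one 0).mpr rfl]; exact max_eq_right (M.le_one x)
  rw [key]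
  constructor
  · intro h
    by_cases hs : Subsingleton α
    · exact Or.inl hs
    rw [not_subsingleton_iff_nontrivial] at hs
    have h01 : (0 : α) ≠ 1 := by
      intro h0
      rcases hs with ⟨a, b, hab⟩
      exact hab (le_antisymm (h0 ▸ M.le_one a |>.trans (M.zero_le b))
        (h0 ▸ M.le_one b |>.trans (M.zero_le a)))
    by_cases htwo : ∀ x : α, x = 0 ∨ x = 1
    · exact Or.inr (Or.inl ⟨h01, htwo⟩)
    · push_neg at htwo
      obtain ⟨a, ha0, ha1⟩ := htwo
      have ha1' : a < 1 := lt_of_le_of_ne (M.le_one a) ha1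
      have haa : M.mul a a = 0 := (h a).resolve_left ha1
      have hac : a ≤ M.imp a 0 := (M.residuation a a 0).mp (le_of_eq haa)
      have hc1 : M.imp a 0 < 1 := by
        refine lt_of_le_of_ne (M.le_one _) fun hc => ha0 ?_
        exact (neg_one a).mp hc
      refine Or.inr (Or.inr ⟨⟨M.imp a 0, hc1, fun x hx => ?_⟩,
        fun x hx => (h x).resolve_left (ne_of_lt hx)⟩)
      by_contra hxc
      push_neg at hxc
      have hxa : ¬ M.mul x a ≤ 0 := fun hle =>
        not_le_of_gt hxc ((M.residuation x a 0).mp hle)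
      have : M.mul x a ≤ M.mul x x := by
        rw [M.mul_comm x a, M.mul_comm x x]
        exact M.mul_le_mul a x x (le_of_lt (lt_of_le_of_lt hac hxc))
      rw [(h x).resolve_left (ne_of_lt hx)] at this
      exact hxa this
  · rintro (hs | ⟨h01, htwo⟩ | ⟨_, hsq⟩) x
    · exact Or.inl (Subsingleton.elim x 1)
    · rcases htwo x with h' | h'
      · subst h'; exact Or.inr (mul_zero 0)
      · exact Or.inl h'
    · rcases eq_or_lt_of_le (M.le_one x) with h' | h'
      · exact Or.inl h'
      · exact Or.inr (hsq x h')
end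

section
/- Every finite DP-chain embeds into any infinite DP-chain: if B is a finite DP-chain and A is an infinite DP-chain, then there exists an injective map B → A preserving 0, 1, *, ⇒, and the order. -/
namespace DPChain

variable {γ : Type*} [LinearOrder γ] [Zero γ] [One γ] (C : DPChain γ)

lemma mul_eq (x y : γ) :
    C.mul x y = if x = 1 then y else if y = 1 then x else 0 := by
  split_ifs with hx hy
  · subst hx; rw [C.mul_comm, C.mul_one]
  · subst hy; exact C.mul_one x
  · have hx1 : x < 1 := lt_of_le_of_ne (C.le_one x) hx
    have hy1 : y < 1 := lt_of_le_of_ne (C.le_one y) hy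
    rcases le_total x y with h | h
    · refine le_antisymm ?_ (C.zero_le _)
      calc C.mul x y ≤ C.mul y y := C.mul_le_mul x y y h
        _ = 0 := C.mul_self_eq_zero y hy1
    · refine le_antisymm ?_ (C.zero_le _)
      calc C.mul x y = C.mul y x := C.mul_comm x y
        _ ≤ C.mul x x := C.mul_le_mul y x x h
        _ = 0 := C.mul_self_eq_zero x hx1

lemma imp_eq (x y : γ) :
    C.imp x y = if x ≤ y then 1 else if x = 1 then y else C.coatom := by
  split_ifs with h hx
  · refine le_antisymm (C.le_one _) ?_
    refine (C.residuation 1 x y).mp ?_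
    have : C.mul 1 x = x := by rw [C.mul_comm, C.mul_one]
    rw [this]; exact h
  · subst hx
    refine le_antisymm ?_ ?_
    · have := (C.residuation (C.imp 1 y) 1 y).mpr le_rfl
      rwa [C.mul_one] at this
    · refine (C.residuation y 1 y).mp ?_
      rw [C.mul_one]
  · have hyx : y < x := not_le.mp h
    have hx1 : x < 1 := lt_of_le_of_ne (C.le_one x) hx
    refine le_antisymm ?_ ?_
    · refine C.le_coatom _ ?_
      by_contra h1
      have heq : C.imp x y = 1 := le_antisymm (C.le_one _) (not_lt.mp h1)
      have := (C.residuation 1 x y).mpr (le_of_eq heq.symm)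
      rw [C.mul_comm, C.mul_one] at this
      exact h this
    · refine (C.residuation C.coatom x y).mp ?_
      have : C.mul C.coatom x = 0 := by
        rw [C.mul_eq]
        simp [C.coatom_lt_one.ne, hx]
      rw [this]; exact C.zero_le y

end DPChain

private lemma dpChain_assemble {α β : Type*} [LinearOrder α] [Zero α] [One α]
    [LinearOrder β] [Zero β] [One β]
    (A : DPChain α) (B : DPChain β) (f : β → α)
    (hmono : StrictMono f) (h0 : f 0 = 0) (h1 : f 1 = 1)
    (hc : 0 < B.coatom → f B.coatom = A.coatom) :
    (∀ x y : β, f (B.mul x y) = A.mul (f x) (f y)) ∧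
    (∀ x y : β, f (B.imp x y) = A.imp (f x) (f y)) := by
  have hinj := hmono.injective
  have hone : ∀ x : β, f x = 1 ↔ x = 1 := fun x =>
    ⟨fun h => hinj (h.trans h1.symm), fun h => h ▸ h1⟩
  constructor
  · intro x y
    rw [B.mul_eq, A.mul_eq]
    simp only [hone]
    split_ifs <;> simp [h0]
  · intro x y
    rw [B.imp_eq, A.imp_eq]
    simp only [hone, hmono.le_iff_le]
    split_ifs with h hx
    · exact h1
    · rfl
    · refine hc ?_
      have hyx : y < x := not_le.mp h
      have hx1 : x < 1 := lt_of_le_of_ne (B.le_one x) hx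
      exact lt_of_le_of_lt (B.zero_le y) (lt_of_lt_of_le hyx (B.le_coatom x hx1))

/-- Every finite DP-chain embeds into any infinite DP-chain. -/
theorem finite_dpChain_embeds_into_infinite
    {α β : Type*} [LinearOrder α] [Zero α] [One α] [LinearOrder β] [Zero β] [One β]
    [Finite β] [Infinite α]
    (A : DPChain α) (B : DPChain β) :
    ∃ f : β → α,
      Function.Injective f ∧
      f 0 = 0 ∧ f 1 = 1 ∧
      StrictMono f ∧
      (∀ x y : β, f (B.mul x y) = A.mul (f x) (f y)) ∧
      (∀ x y : β, f (B.imp x y) = A.imp (f x) (f y)) := by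
  classical
  have hβ01 : (0 : β) < 1 := lt_of_le_of_lt (B.zero_le B.coatom) B.coatom_lt_one
  -- The set of elements strictly between 0 and A.coatom is infinite.
  set T : Set α := {x : α | 0 < x ∧ x < A.coatom} with hTdef
  have hT : T.Infinite := by
    by_contra hfin
    rw [Set.not_infinite] at hfin
    have hsub : (Set.univ : Set α) ⊆ T ∪ {0, A.coatom, 1} := by
      intro x _
      by_cases h1 : x = 1
      · right; simp [h1]
      · have hx1 : x < 1 := lt_of_le_of_ne (A.le_one x) h1
        have hxc : x ≤ A.coatom := A.le_coatom x hx1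
        by_cases hc : x = A.coatom
        · right; simp [hc]
        · by_cases h0 : x = 0
          · right; simp [h0]
          · left
            exact ⟨lt_of_le_of_ne (A.zero_le x) (Ne.symm h0),
              lt_of_le_of_ne hxc hc⟩
    have : (Set.univ : Set α).Finite :=
      Set.Finite.subset (hfin.union (Set.toFinite _)) hsub
    exact Set.infinite_univ this
  have hApos : 0 < A.coatom := by
    obtain ⟨x, hx⟩ := hT.nonempty
    exact lt_trans hx.1 hx.2
  by_cases hBpos : 0 < B.coatom
  · -- Nondegenerate case: B has at least three elements.
    have := Fintype.ofFinite β
    -- elements of β other than 0, coatom, 1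
    set middle : Finset β := Finset.univ.filter (fun x => 0 < x ∧ x < B.coatom)
      with hmid
    obtain ⟨s, hsT, hscard⟩ := hT.exists_subset_card_eq middle.card
    have hs : ∀ x ∈ s, 0 < x ∧ x < A.coatom := fun x hx => hsT hx
    set u : Finset α := insert 0 (insert A.coatom (insert 1 s)) with hu
    have h1s : (1 : α) ∉ s := fun h =>
      absurd (lt_trans (hs 1 h).2 A.coatom_lt_one) (lt_irrefl 1)
    have hcs : A.coatom ∉ s := fun h => absurd (hs _ h).2 (lt_irrefl _)
    have h0s : (0 : α) ∉ s := fun h => absurd (hs _ h).1 (lt_irrefl _)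
    have hucard : u.card = s.card + 3 := by
      rw [hu, Finset.card_insert_of_notMem, Finset.card_insert_of_notMem,
        Finset.card_insert_of_notMem h1s]
      · simp [A.coatom_lt_one.ne, hcs]
      · simp [hApos.ne, h0s, (lt_of_le_of_lt (A.zero_le _) A.coatom_lt_one).ne]
    have huniv : (Finset.univ : Finset β) =
        insert 0 (insert B.coatom (insert 1 middle)) := by
      ext x
      simp only [Finset.mem_univ, true_iff, true_and, Finset.mem_insert, hmid,
        Finset.mem_filter]
      by_cases h1 : x = 1
      · tauto
      · have hx1 : x < 1 := lt_of_le_of_ne (B.le_one x) h1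
        have hxc : x ≤ B.coatom := B.le_coatom x hx1
        by_cases hc : x = B.coatom
        · tauto
        · by_cases h0 : x = 0
          · tauto
          · right; right; right
            exact ⟨lt_of_le_of_ne (B.zero_le x) (Ne.symm h0),
              lt_of_le_of_ne hxc hc⟩
    have h1m : (1 : β) ∉ middle := by
      simp only [hmid, Finset.mem_filter]
      rintro ⟨-, -, h⟩
      exact absurd h (not_lt.mpr B.coatom_lt_one.le)
    have hcm : B.coatom ∉ middle := by simp [hmid]
    have h0m : (0 : β) ∉ middle := by simp [hmid]
    have hcardβ : Fintype.card β = u.card := by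
      rw [hucard, hscard]
      rw [← Finset.card_univ, huniv,
        Finset.card_insert_of_notMem, Finset.card_insert_of_notMem,
        Finset.card_insert_of_notMem h1m]
      · simp [B.coatom_lt_one.ne, hcm]
      · simp [hBpos.ne, h0m, hβ01.ne]
    -- Order isomorphisms through Fin
    have hcardu : Fintype.card ↥u = u.card := Fintype.card_coe u
    let e : Fin u.card ≃o β := monoEquivOfFin β hcardβ
    let e' : Fin u.card ≃o ↥u := monoEquivOfFin ↥u hcardu
    let f : β → α := fun b => ((e' (e.symm b)) : α)
    have hmono : StrictMono f := by
      intro a b hab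
      have : e' (e.symm a) < e' (e.symm b) := by
        rw [e'.lt_iff_lt, e.symm.lt_iff_lt]; exact hab
      exact this
    have hmemu : ∀ b : β, f b ∈ u := fun b => (e' (e.symm b)).2
    have hsurj : ∀ a ∈ u, ∃ b : β, f b = a := by
      intro a ha
      refine ⟨e (e'.symm ⟨a, ha⟩), ?_⟩
      simp [f]
    have h1mem : (1 : α) ∈ u := by simp [hu]
    have h0mem : (0 : α) ∈ u := by simp [hu]
    have hcmem : A.coatom ∈ u := by simp [hu]
    have h1 : f 1 = 1 := by
      obtain ⟨b, hb⟩ := hsurj 1 h1mem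
      refine le_antisymm (A.le_one _) ?_
      rw [← hb]
      exact hmono.monotone (B.le_one b)
    have h0 : f 0 = 0 := by
      obtain ⟨b, hb⟩ := hsurj 0 h0mem
      refine le_antisymm ?_ (A.zero_le _)
      rw [← hb]
      exact hmono.monotone (B.zero_le b)
    have hc : f B.coatom = A.coatom := by
      have hle : f B.coatom ≤ A.coatom := by
        have hne : f B.coatom ≠ 1 := by
          intro h
          exact B.coatom_lt_one.ne (hmono.injective (h.trans h1.symm))
        have := hmemu B.coatom
        rw [hu] at this
        simp only [Finset.mem_insert] at this
        rcases this with h | h | h | h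
        · rw [h]; exact A.zero_le _
        · exact le_of_eq h
        · exact absurd h hne
        · exact (hs _ h).2.le
      refine le_antisymm hle ?_
      obtain ⟨z, hz⟩ := hsurj A.coatom hcmem
      have hz1 : z ≠ 1 := by
        intro h; rw [h, h1] at hz; exact A.coatom_lt_one.ne hz.symm
      have : z ≤ B.coatom := B.le_coatom z (lt_of_le_of_ne (B.le_one z) hz1)
      calc A.coatom = f z := hz.symm
        _ ≤ f B.coatom := hmono.monotone this
    obtain ⟨hmul, himp⟩ := dpChain_assemble A B f hmono h0 h1 (fun _ => hc)
    exact ⟨f, hmono.injective, h0, h1, hmono, hmul, himp⟩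
  · -- Degenerate case: B.coatom = 0, so β = {0, 1}.
    have hB0 : B.coatom = 0 := le_antisymm (not_lt.mp hBpos) (B.zero_le _)
    have hβ : ∀ x : β, x ≠ 1 → x = 0 := by
      intro x hx
      have : x ≤ B.coatom := B.le_coatom x (lt_of_le_of_ne (B.le_one x) hx)
      rw [hB0] at this
      exact le_antisymm this (B.zero_le x)
    have hα01 : (0 : α) < 1 := lt_of_le_of_lt (A.zero_le A.coatom) A.coatom_lt_one
    let f : β → α := fun x => if x = 1 then 1 else 0
    have hmono : StrictMono f := by
      intro a b hab
      by_cases hb : b = 1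
      · have ha : a ≠ 1 := fun h => absurd (h ▸ hab) (not_lt.mpr (h ▸ B.le_one b))
        simp only [f, hb, ha, if_true, if_false]
        exact hα01
      · exact absurd (lt_of_lt_of_le hab (le_of_eq (hβ b hb)))
          (not_lt.mpr (B.zero_le a))
    have h0 : f 0 = 0 := by simp only [f, if_neg hβ01.ne]
    have h1 : f 1 = 1 := by simp [f]
    obtain ⟨hmul, himp⟩ := dpChain_assemble A B f hmono h0 h1
      (fun h => absurd (hB0 ▸ h) (lt_irrefl 0))
    exact ⟨f, hmono.injective, h0, h1, hmono, hmul, himp⟩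
end

section
/- Every countable DP-chain embeds into [0,1]^c for any fixed c ∈ (0,1): there is an injective homomorphism preserving 0, 1, order, *, and ⇒. -/
/-- The universe of the canonical algebra `[0,1]^c`. -/
def dpSet (c : ℝ) : Set ℝ := Set.Icc 0 c ∪ {1}
/-- The drastic product on `ℝ` (restricted to `[0,1]^c`). -/
noncomputable def dpMul (x y : ℝ) : ℝ := if x < 1 ∧ y < 1 then 0 else min x y
/-- The residuum of the drastic product on `[0,1]^c`. -/
noncomputable def dpImp (c x y : ℝ) : ℝ := if x ≤ y then 1 else if x = 1 then y else c

section Aux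
variable {α : Type*} [LinearOrder α] [Zero α] [One α] (B : DPChain α)

theorem DPChain.one_mul (x : α) : B.mul 1 x = x := by rw [B.mul_comm, B.mul_one]

theorem DPChain.mul_eq_zero {x y : α} (hx : x < 1) (hy : y < 1) : B.mul x y = 0 := by
  rcases le_total x y with h | h
  · have h1 : B.mul x y ≤ B.mul y y := B.mul_le_mul x y y h
    rw [B.mul_self_eq_zero y hy] at h1
    exact le_antisymm h1 (B.zero_le _)
  · have h1 : B.mul x y ≤ B.mul x x := by
      rw [B.mul_comm x y, B.mul_comm x x]; exact B.mul_le_mul y x x h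
    rw [B.mul_self_eq_zero x hx] at h1
    exact le_antisymm h1 (B.zero_le _)

theorem DPChain.imp_eq_one {x y : α} (h : x ≤ y) : B.imp x y = 1 := by
  have : (1 : α) ≤ B.imp x y := by
    rw [← B.residuation, B.one_mul]; exact h
  exact le_antisymm (B.le_one _) this

theorem DPChain.one_imp (y : α) : B.imp 1 y = y := by
  have h1 : B.imp 1 y ≤ y := by
    have := (B.residuation (B.imp 1 y) 1 y).mpr le_rfl
    rwa [B.mul_one] at this
  have h2 : y ≤ B.imp 1 y := by rw [← B.residuation, B.mul_one]
  exact le_antisymm h1 h2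

theorem DPChain.imp_eq_coatom {x y : α} (hyx : y < x) (hx : x < 1) :
    B.imp x y = B.coatom := by
  have h1 : B.coatom ≤ B.imp x y := by
    rw [← B.residuation, B.mul_eq_zero B.coatom_lt_one hx]; exact B.zero_le _
  have h2 : B.imp x y < 1 := by
    rcases lt_or_eq_of_le (B.le_one (B.imp x y)) with h | h
    · exact h
    · exfalso
      have := (B.residuation 1 x y).mpr (h ▸ le_rfl)
      rw [B.one_mul] at this
      exact absurd this (not_le_of_gt hyx)
  exact le_antisymm (B.le_coatom _ h2) h1

include B in
theorem DPChain.zero_lt_one' : (0 : α) < 1 :=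
  lt_of_le_of_lt (B.zero_le B.coatom) B.coatom_lt_one

end Aux

/-- Every countable DP-chain embeds into `[0,1]^c`, for any `c ∈ (0,1)`. -/
theorem countable_dpChain_embeds {β : Type*} [LinearOrder β] [Zero β] [One β]
    [Countable β] (B : DPChain β) (c : ℝ) (hc : c ∈ Set.Ioo (0:ℝ) 1) :
    ∃ f : β → ℝ,
      (∀ x : β, f x ∈ dpSet c) ∧
      Function.Injective f ∧
      f 0 = 0 ∧ f 1 = 1 ∧
      StrictMono f ∧
      (∀ x y : β, f (B.mul x y) = dpMul (f x) (f y)) ∧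
      (∀ x y : β, f (B.imp x y) = dpImp c (f x) (f y)) := by
  obtain ⟨hc0, hc1⟩ := hc
  haveI : Nontrivial ↥(Set.Ioo (0:ℝ) c) := by
    refine ⟨⟨c/3, by constructor <;> linarith⟩, ⟨c/2, by constructor <;> linarith⟩, ?_⟩
    simp only [ne_eq, Subtype.mk.injEq]; intro h; have h' : c/3 = c/2 := congrArg Subtype.val h; linarith
  obtain ⟨g⟩ := Order.embedding_from_countable_to_dense β ↥(Set.Ioo (0:ℝ) c)
  refine ⟨fun x => if x = 0 then 0 else if x = 1 then 1 else if x = B.coatom then c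
    else (g x : ℝ), ?_⟩
  set f : β → ℝ := fun x =>
    if x = 0 then 0 else if x = 1 then 1 else if x = B.coatom then c else (g x : ℝ)
  have hfx : ∀ x : β, f x =
      if x = 0 then 0 else if x = 1 then 1 else if x = B.coatom then c else (g x : ℝ) :=
    fun _ => rfl
  have hg0 : ∀ x : β, (0:ℝ) < (g x : ℝ) := fun x => (g x).2.1
  have hgc : ∀ x : β, (g x : ℝ) < c := fun x => (g x).2.2
  have hmem : ∀ x : β, f x ∈ dpSet c := by
    intro x
    rw [hfx x]; unfold dpSet
    split_ifs with h0 h1 hco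
    · exact Or.inl ⟨le_rfl, le_of_lt hc0⟩
    · exact Or.inr rfl
    · exact Or.inl ⟨le_of_lt hc0, le_rfl⟩
    · exact Or.inl ⟨le_of_lt (hg0 x), le_of_lt (hgc x)⟩
  have hf0 : f 0 = 0 := by rw [hfx 0, if_pos rfl]
  have hf1 : f 1 = 1 := by
    have h01 : (0:β) ≠ 1 := ne_of_lt B.zero_lt_one'
    rw [hfx 1, if_neg h01.symm, if_pos rfl]
  have hmono : StrictMono f := by
    intro a b hab
    by_cases ha0 : a = 0
    · rw [hfx a, if_pos ha0]
      have hb0 : b ≠ 0 := by rintro rfl; exact absurd hab (by simp [ha0])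
      rw [hfx b, if_neg hb0]
      split_ifs with h1 hco
      · exact one_pos
      · exact hc0
      · exact hg0 b
    have ha1 : a ≠ 1 := by
      rintro rfl; exact absurd (B.le_one b) (not_le_of_gt hab)
    by_cases hb1 : b = 1
    · have hfa : f a ≤ c := by
        rw [hfx a, if_neg ha0, if_neg ha1]
        split_ifs with hco
        · exact le_rfl
        · exact le_of_lt (hgc a)
      calc f a ≤ c := hfa
        _ < 1 := hc1
        _ = f b := by rw [hb1, hf1]
    have hb_lt1 : b < 1 := lt_of_le_of_ne (B.le_one b) hb1
    have hbco : b ≤ B.coatom := B.le_coatom b hb_lt1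
    have haco : a ≠ B.coatom := by
      intro h; rw [h] at hab; exact absurd hbco (not_le_of_gt hab)
    have hb0 : b ≠ 0 := fun h => absurd (h ▸ hab) (not_lt_of_ge (B.zero_le a))
    by_cases hbco' : b = B.coatom
    · rw [hfx a, hfx b, if_neg ha0, if_neg ha1, if_neg haco, if_neg hb0, if_neg hb1,
        if_pos hbco']
      exact hgc a
    · rw [hfx a, hfx b, if_neg ha0, if_neg ha1, if_neg haco, if_neg hb0, if_neg hb1,
        if_neg hbco']
      exact_mod_cast g.strictMono hab
  have hlt1 : ∀ x : β, x < 1 → f x < 1 := fun x hx => by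
    calc f x < f 1 := hmono hx
      _ = 1 := hf1
  have hle1 : ∀ x : β, f x ≤ 1 := fun x => by
    rcases lt_or_eq_of_le (B.le_one x) with h | h
    · exact le_of_lt (hlt1 x h)
    · rw [h, hf1]
  refine ⟨hmem, hmono.injective, hf0, hf1, hmono, ?_, ?_⟩
  · intro x y
    by_cases hx : x = 1
    · subst hx
      rw [B.one_mul, dpMul, hf1]
      have : ¬((1:ℝ) < 1 ∧ f y < 1) := by rintro ⟨h, -⟩; exact lt_irrefl _ h
      rw [if_neg this, min_eq_right (hle1 y)]
    · by_cases hy : y = 1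
      · subst hy
        rw [B.mul_one, dpMul, hf1]
        have : ¬(f x < 1 ∧ (1:ℝ) < 1) := by rintro ⟨-, h⟩; exact lt_irrefl _ h
        rw [if_neg this, min_eq_left (hle1 x)]
      · have hx' := lt_of_le_of_ne (B.le_one x) hx
        have hy' := lt_of_le_of_ne (B.le_one y) hy
        rw [B.mul_eq_zero hx' hy', hf0, dpMul, if_pos ⟨hlt1 x hx', hlt1 y hy'⟩]
  · intro x y
    rcases le_or_gt x y with hxy | hyx
    · rw [B.imp_eq_one hxy, hf1, dpImp, if_pos (hmono.monotone hxy)]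
    · have hfyx : ¬ f x ≤ f y := not_le_of_gt (hmono hyx)
      by_cases hx : x = 1
      · subst hx
        rw [B.one_imp, dpImp, if_neg hfyx, if_pos hf1]
      · have hx' := lt_of_le_of_ne (B.le_one x) hx
        rw [B.imp_eq_coatom hyx hx', dpImp, if_neg hfyx,
          if_neg (ne_of_lt (hlt1 x hx'))]
        have hco0 : B.coatom ≠ 0 := by
          intro h
          have hxc : x ≤ B.coatom := B.le_coatom x hx'
          rw [h] at hxc
          exact absurd (lt_of_le_of_lt (B.zero_le y) hyx) (not_lt_of_ge hxc)
        have hco1 : B.coatom ≠ 1 := ne_of_lt B.coatom_lt_one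
        rw [hfx B.coatom, if_neg hco0, if_neg hco1, if_pos rfl]
end

section
/- Every nontrivial finite DP-chain embeds into any DP-chain of strictly greater (finite) cardinality. -/
namespace DPChain

variable {γ : Type*} [LinearOrder γ] [Zero γ] [One γ] (C : DPChain γ)

lemma one_mul' (x : γ) : C.mul 1 x = x := by
  rw [C.mul_comm]; exact C.mul_one x

lemma mul_eq_zero_s12 {x y : γ} (hx : x < 1) (hy : y < 1) : C.mul x y = 0 := by
  rcases le_total x y with h | h
  · have h1 : C.mul x y ≤ C.mul y y := C.mul_le_mul x y y h
    rw [C.mul_self_eq_zero y hy] at h1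
    exact le_antisymm h1 (C.zero_le _)
  · have h1 : C.mul y x ≤ C.mul x x := C.mul_le_mul y x x h
    rw [C.mul_comm y x] at h1
    rw [C.mul_self_eq_zero x hx] at h1
    exact le_antisymm h1 (C.zero_le _)

lemma imp_eq_one_s12 {y z : γ} (h : y ≤ z) : C.imp y z = 1 := by
  refine le_antisymm (C.le_one _) ?_
  exact (C.residuation 1 y z).mp (by rw [C.one_mul']; exact h)

lemma imp_one (z : γ) : C.imp 1 z = z := by
  refine le_antisymm ?_ ?_
  · have := (C.residuation (C.imp 1 z) 1 z).mpr le_rfl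
    rwa [C.mul_one] at this
  · exact (C.residuation z 1 z).mp (by rw [C.mul_one])

lemma imp_eq_coatom_s12 {y z : γ} (hz : z < y) (hy : y < 1) : C.imp y z = C.coatom := by
  refine le_antisymm ?_ ?_
  · apply C.le_coatom
    rcases lt_or_eq_of_le (C.le_one (C.imp y z)) with h | h
    · exact h
    · exfalso
      have h1 : C.mul 1 y ≤ z := (C.residuation 1 y z).mpr (le_of_eq h.symm)
      rw [C.one_mul'] at h1
      exact absurd h1 (not_le.mpr hz)
  · refine (C.residuation _ _ _).mp ?_
    rw [C.mul_eq_zero_s12 C.coatom_lt_one hy]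
    exact C.zero_le z

end DPChain

set_option maxHeartbeats 1000000 in
/-- Every nontrivial finite DP-chain embeds into any DP-chain of strictly
greater finite cardinality. -/
theorem finite_dpChain_embeds_into_larger
    {α β : Type*} [LinearOrder α] [Zero α] [One α] [LinearOrder β] [Zero β] [One β]
    [Finite β] [Finite α] [Nontrivial β]
    (A : DPChain α) (B : DPChain β)
    (hcard : Nat.card β < Nat.card α) :
    ∃ f : β → α,
      Function.Injective f ∧
      f 0 = 0 ∧ f 1 = 1 ∧
      StrictMono f ∧
      (∀ x y : β, f (B.mul x y) = A.mul (f x) (f y)) ∧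
      (∀ x y : β, f (B.imp x y) = A.imp (f x) (f y)) := by
  letI := Fintype.ofFinite α
  letI := Fintype.ofFinite β
  obtain ⟨n, hn⟩ : ∃ n, Fintype.card β = n := ⟨_, rfl⟩
  obtain ⟨m, hm⟩ : ∃ m, Fintype.card α = m := ⟨_, rfl⟩
  have hn2 : 2 ≤ n := hn ▸ Fintype.one_lt_card
  have hnm : n < m := by
    rw [Nat.card_eq_fintype_card, Nat.card_eq_fintype_card, hn, hm] at hcard
    exact hcard
  have hm3 : 3 ≤ m := by omega
  have hn0 : 0 < n := by omega
  have hn1 : n - 1 < n := by omega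
  have hnn2 : n - 2 < n := by omega
  have hm0 : 0 < m := by omega
  have hm1 : m - 1 < m := by omega
  have hmm2 : m - 2 < m := by omega
  obtain ⟨eβ⟩ : Nonempty (Fin n ≃o β) := ⟨monoEquivOfFin β hn⟩
  obtain ⟨eα⟩ : Nonempty (Fin m ≃o α) := ⟨monoEquivOfFin α hm⟩
  -- the index map
  obtain ⟨φ, hφmono, hφ0, hφ1, hφc⟩ :
      ∃ φ : Fin n → Fin m, StrictMono φ ∧ φ ⟨0, hn0⟩ = ⟨0, hm0⟩ ∧
        φ ⟨n - 1, hn1⟩ = ⟨m - 1, hm1⟩ ∧ (3 ≤ n → φ ⟨n - 2, hnn2⟩ = ⟨m - 2, hmm2⟩) := by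
    refine ⟨fun i =>
      ⟨if i.1 = 0 then 0 else if i.1 = n - 1 then m - 1 else if i.1 = n - 2 then m - 2 else i.1,
        by have := i.2; split_ifs <;> omega⟩, ?_, ?_, ?_, ?_⟩
    · intro i j hij
      have hi := i.2
      have hj := j.2
      have hij' : i.1 < j.1 := hij
      show (_ : ℕ) < _
      simp only [Fin.val_mk]
      split_ifs <;> omega
    · exact Fin.mk_eq_mk.mpr (by simp)
    · exact Fin.mk_eq_mk.mpr (by simp only [Fin.val_mk]; split_ifs <;> omega)
    · intro h3
      exact Fin.mk_eq_mk.mpr (by simp only [Fin.val_mk]; split_ifs <;> omega)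
  -- endpoint computations for β
  have hβ0 : eβ.symm (0 : β) = ⟨0, hn0⟩ := by
    refine le_antisymm ?_ (Fin.mk_le_of_le_val (Nat.zero_le _))
    exact (eβ.symm.monotone (B.zero_le (eβ ⟨0, hn0⟩))).trans_eq (eβ.symm_apply_apply _)
  have hβ1 : eβ.symm (1 : β) = ⟨n - 1, hn1⟩ := by
    refine le_antisymm ?_ ?_
    · exact Fin.le_def.mpr (by simp only [Fin.val_mk]; have := (eβ.symm (1 : β)).2; omega)
    · exact (eβ.symm_apply_apply _).symm.trans_le
        (eβ.symm.monotone (B.le_one (eβ ⟨n - 1, hn1⟩)))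
  have hβc : eβ.symm B.coatom = ⟨n - 2, hnn2⟩ := by
    refine le_antisymm ?_ ?_
    · have h1 : eβ.symm B.coatom < eβ.symm 1 := eβ.symm.strictMono B.coatom_lt_one
      rw [hβ1] at h1
      simp only [Fin.lt_def, Fin.val_mk] at h1
      simp only [Fin.le_def, Fin.val_mk]
      omega
    · have hlt : eβ ⟨n - 2, hnn2⟩ < (1 : β) := by
        have h2 : (⟨n - 2, hnn2⟩ : Fin n) < ⟨n - 1, hn1⟩ := Fin.mk_lt_mk.mpr (by omega)
        have h3 : eβ ⟨n - 1, hn1⟩ = (1 : β) := by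
          rw [← hβ1]; exact eβ.apply_symm_apply 1
        exact (eβ.strictMono h2).trans_eq h3
      exact (eβ.symm_apply_apply _).symm.trans_le (eβ.symm.monotone (B.le_coatom _ hlt))
  -- endpoint computations for α
  have hα0 : eα ⟨0, hm0⟩ = (0 : α) := by
    refine le_antisymm ?_ (A.zero_le _)
    exact (eα.monotone (show (⟨0, hm0⟩ : Fin m) ≤ eα.symm 0 from
      Fin.mk_le_of_le_val (Nat.zero_le _))).trans_eq (eα.apply_symm_apply _)
  have hα1 : eα ⟨m - 1, hm1⟩ = (1 : α) := by
    refine le_antisymm (A.le_one _) ?_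
    exact (eα.apply_symm_apply 1).symm.trans_le (eα.monotone
      (show eα.symm (1 : α) ≤ ⟨m - 1, hm1⟩ from
        Fin.le_def.mpr (by simp only [Fin.val_mk]; have := (eα.symm (1 : α)).2; omega)))
  have hαc : eα ⟨m - 2, hmm2⟩ = A.coatom := by
    refine le_antisymm ?_ ?_
    · apply A.le_coatom
      have h2 : (⟨m - 2, hmm2⟩ : Fin m) < ⟨m - 1, hm1⟩ := Fin.mk_lt_mk.mpr (by omega)
      exact (eα.strictMono h2).trans_eq hα1
    · have h1 : eα.symm A.coatom < eα.symm 1 := eα.symm.strictMono A.coatom_lt_one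
      have h2 : eα.symm (1 : α) = ⟨m - 1, hm1⟩ := by
        refine le_antisymm (Fin.le_def.mpr
          (by simp only [Fin.val_mk]; have := (eα.symm (1 : α)).2; omega)) ?_
        exact (eα.symm_apply_apply _).symm.trans_le
          (eα.symm.monotone (A.le_one (eα ⟨m - 1, hm1⟩)))
      rw [h2] at h1
      have h3 : eα.symm A.coatom ≤ ⟨m - 2, hmm2⟩ := by
        simp only [Fin.lt_def, Fin.val_mk] at h1
        simp only [Fin.le_def, Fin.val_mk]
        omega
      exact (eα.apply_symm_apply _).symm.trans_le (eα.monotone h3)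
  -- the embedding
  have hf : StrictMono (fun b => eα (φ (eβ.symm b))) :=
    eα.strictMono.comp (hφmono.comp eβ.symm.strictMono)
  have hf0 : eα (φ (eβ.symm (0 : β))) = 0 := by rw [hβ0, hφ0, hα0]
  have hf1 : eα (φ (eβ.symm (1 : β))) = 1 := by rw [hβ1, hφ1, hα1]
  have hflt1 : ∀ x : β, x < 1 → eα (φ (eβ.symm x)) < 1 := fun x hx =>
    lt_of_lt_of_eq (hf hx) hf1
  have hfc : ∀ y z : β, z < y → y < 1 → eα (φ (eβ.symm B.coatom)) = A.coatom := by
    intro y z hzy hy1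
    have hc0 : (0 : β) < B.coatom :=
      lt_of_le_of_lt (B.zero_le z) (lt_of_lt_of_le hzy (B.le_coatom y hy1))
    have hn3 : 3 ≤ n := by
      by_contra h
      have heq : eβ.symm (0 : β) = eβ.symm B.coatom := by
        rw [hβ0, hβc]
        exact Fin.mk_eq_mk.mpr (by omega)
      exact absurd (eβ.symm.injective heq) (ne_of_lt hc0)
    rw [hβc, hφc hn3, hαc]
  refine ⟨fun b => eα (φ (eβ.symm b)), hf.injective, hf0, hf1, hf, ?_, ?_⟩
  · -- multiplication
    intro x y
    beta_reduce
    rcases eq_or_lt_of_le (B.le_one x) with hx | hx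
    · rw [hx, B.one_mul', hf1, A.one_mul']
    · rcases eq_or_lt_of_le (B.le_one y) with hy | hy
      · rw [hy, B.mul_one, hf1, A.mul_one]
      · rw [B.mul_eq_zero_s12 hx hy, hf0, A.mul_eq_zero_s12 (hflt1 x hx) (hflt1 y hy)]
  · -- implication
    intro x y
    beta_reduce
    rcases le_or_gt x y with hxy | hxy
    · rw [B.imp_eq_one_s12 hxy, hf1, A.imp_eq_one_s12 (hf.monotone hxy)]
    · rcases eq_or_lt_of_le (B.le_one x) with hx | hx
      · rw [hx, B.imp_one, hf1, A.imp_one]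
      · rw [B.imp_eq_coatom_s12 hxy hx, hfc x y hxy hx,
          A.imp_eq_coatom_s12 (hf hxy) (hflt1 x hx)]
end

section
/- Every DP-chain is simple: any congruence of a DP-chain (compatible with *, ⇒, and the lattice operations) is either the identity relation or the total relation. -/
/-- Every DP-chain is simple: every congruence is the identity or the total
relation. -/
theorem dpChain_simple {α : Type*} [LinearOrder α] [Zero α] [One α]
    (M : DPChain α) (r : α → α → Prop)
    (hequiv : Equivalence r)
    (hmul : ∀ a b c d : α, r a b → r c d → r (M.mul a c) (M.mul b d))
    (himp : ∀ a b c d : α, r a b → r c d → r (M.imp a c) (M.imp b d))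
    (hmin : ∀ a b c d : α, r a b → r c d → r (min a c) (min b d))
    (hmax : ∀ a b c d : α, r a b → r c d → r (max a c) (max b d)) :
    (∀ a b : α, r a b → a = b) ∨ (∀ a b : α, r a b) := by
  by_cases hid : ∀ a b : α, r a b → a = b
  · exact Or.inl hid
  · right
    push_neg at hid
    obtain ⟨a, b, hab, hne⟩ := hid
    -- WLOG a < b
    have key : ∀ x y : α, x < y → r x y → ∀ u v : α, r u v := by
      intro x y hxy hrxy
      -- r (imp y x) (imp y y)
      have h1 : r (M.imp y x) (M.imp y y) := himp _ _ _ _ (hequiv.refl y) hrxy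
      have himpyy : M.imp y y = 1 := by
        have h2 : (1 : α) ≤ M.imp y y := by
          rw [← M.residuation]
          rw [M.mul_comm, M.mul_one]
        exact le_antisymm (M.le_one _) h2
      have himpyx : M.imp y x < 1 := by
        rcases lt_or_ge (M.imp y x) 1 with h | h
        · exact h
        · exfalso
          have : M.mul 1 y ≤ x := (M.residuation 1 y x).mpr (le_trans h le_rfl)
          rw [M.mul_comm, M.mul_one] at this
          exact absurd (lt_of_lt_of_le hxy this) (lt_irrefl x)
      rw [himpyy] at h1
      -- square: r (mul c c) (mul 1 1) = r 0 1
      have h3 : r (M.mul (M.imp y x) (M.imp y x)) (M.mul 1 1) := hmul _ _ _ _ h1 h1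
      rw [M.mul_self_eq_zero _ himpyx, M.mul_one] at h3
      -- r 0 1, hence r 0 u for all u
      have hzero : ∀ u : α, r 0 u := by
        intro u
        have h4 : r (M.mul u 0) (M.mul u 1) := hmul _ _ _ _ (hequiv.refl u) h3
        rw [M.mul_one] at h4
        have hmu0 : M.mul u 0 = 0 := by
          have : M.mul u 0 ≤ M.mul 1 0 := M.mul_le_mul _ _ _ (M.le_one u)
          rw [M.mul_comm 1 0, M.mul_one] at this
          exact le_antisymm this (M.zero_le _)
        rwa [hmu0] at h4
      intro u v
      exact hequiv.trans (hequiv.symm (hzero u)) (hzero v)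
    rcases lt_trichotomy a b with h | h | h
    · exact key a b h hab
    · exact absurd h hne
    · exact key b a h (hequiv.symm hab)
end

section
/- Let a_h^(k) for h ≥ 3 be defined by a_h^(k) = Σ_{i=0}^{h-2} (-1)^i C(h-2, i) (h+1-i)^k, and set a_1^(k) = 2^k, a_2^(k) = 3^k - 2^k. Then these sequences satisfy the recurrences a_1^(k+1) = 2 a_1^(k), a_2^(k+1) = a_1^(k) + 3 a_2^(k), a_3^(k+1) = a_1^(k) + a_2^(k) + 4 a_3^(k), and a_h^(k+1) = (h-2) a_{h-1}^(k) + (h+1) a_h^(k) for h > 3, with the appropriate initial conditions at k = 1 (a_1^(1)=2, a_2^(1)=1, a_3^(1)=1, a_h^(1)=0 for h>3). -/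
open Finset

/-- The multiplicity of the dual chain `h` in the free `k`-generated
DP-algebra: `a 1 k = 2^k`, `a 2 k = 3^k - 2^k`, and for `h ≥ 3`,
`a h k = ∑_{i=0}^{h-2} (-1)^i C(h-2,i) (h+1-i)^k`. -/
def dpCoeff (h k : ℕ) : ℤ :=
  if h = 1 then 2 ^ k
  else if h = 2 then 3 ^ k - 2 ^ k
  else ∑ i ∈ Finset.range (h - 1), (-1 : ℤ) ^ i * (Nat.choose (h - 2) i) * ((h : ℤ) + 1 - i) ^ k

lemma key (m k : ℕ) (c : ℤ) :
    ∑ i ∈ range (m+2), (-1:ℤ)^i * (Nat.choose (m+1) i) * (c - i)^(k+1)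
    = (m+1) * ∑ j ∈ range (m+1), (-1:ℤ)^j * (Nat.choose m j) * ((c-1) - j)^k
      + c * ∑ i ∈ range (m+2), (-1:ℤ)^i * (Nat.choose (m+1) i) * (c - i)^k := by
  have h1 : ∑ i ∈ range (m+2), (-1:ℤ)^i * (Nat.choose (m+1) i) * (c - i)^(k+1)
      = c * (∑ i ∈ range (m+2), (-1:ℤ)^i * (Nat.choose (m+1) i) * (c - i)^k)
        - ∑ i ∈ range (m+2), (i:ℤ) * ((-1:ℤ)^i * (Nat.choose (m+1) i) * (c - i)^k) := by
    rw [Finset.mul_sum, ← Finset.sum_sub_distrib]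
    refine Finset.sum_congr rfl fun i _ => by ring
  have h2 : ∑ i ∈ range (m+2), (i:ℤ) * ((-1:ℤ)^i * (Nat.choose (m+1) i) * (c - i)^k)
      = -((m+1) * ∑ j ∈ range (m+1), (-1:ℤ)^j * (Nat.choose m j) * ((c-1) - j)^k) := by
    rw [Finset.sum_range_succ']
    simp only [Nat.cast_zero, zero_mul, add_zero]
    rw [Finset.mul_sum, ← Finset.sum_neg_distrib]
    refine Finset.sum_congr rfl fun j _ => ?_
    have hc : ((m+1) * Nat.choose m j : ℤ) = (Nat.choose (m+1) (j+1)) * (j+1) := by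
      exact_mod_cast congrArg (Nat.cast : ℕ → ℤ) (Nat.add_one_mul_choose_eq m j)
    push_cast
    push_cast at hc
    linear_combination ((-1:ℤ)^j * (c - 1 - j)^k) * hc
  rw [h1, h2]; ring

lemma alt (n : ℕ) (c : ℤ) :
    ∑ i ∈ range (n+2), (-1:ℤ)^i * (Nat.choose (n+1) i) * (c - i)^0 = 0 := by
  simp only [pow_zero, mul_one]
  simpa using Int.alternating_sum_range_choose (n := n+1)


lemma dpCoeff_big (m k : ℕ) :
    dpCoeff (m+4) k
      = ∑ i ∈ range ((m+1)+2), (-1:ℤ)^i * (Nat.choose ((m+1)+1) i) * (((m:ℤ)+5) - i)^k := by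
  unfold dpCoeff
  rw [if_neg (by omega), if_neg (by omega)]
  refine Finset.sum_congr (by norm_num) fun i _ => ?_
  have : m + 4 - 2 = (m+1)+1 := by omega
  rw [this]
  push_cast
  ring_nf

lemma dpCoeff_mid (m k : ℕ) :
    dpCoeff (m+3) k
      = ∑ i ∈ range (m+2), (-1:ℤ)^i * (Nat.choose (m+1) i) * (((m:ℤ)+4) - i)^k := by
  unfold dpCoeff
  rw [if_neg (by omega), if_neg (by omega)]
  refine Finset.sum_congr (by norm_num) fun i _ => ?_
  have : m + 3 - 2 = m+1 := by omega
  rw [this]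
  push_cast
  ring_nf

/-- The coefficients satisfy the stated recurrences and initial conditions. -/
theorem dpCoeff_recurrences :
    (dpCoeff 1 1 = 2 ∧ dpCoeff 2 1 = 1 ∧ dpCoeff 3 1 = 1 ∧
      ∀ h : ℕ, h > 3 → dpCoeff h 1 = 0) ∧
    ∀ k : ℕ, 1 ≤ k →
      dpCoeff 1 (k + 1) = 2 * dpCoeff 1 k ∧
      dpCoeff 2 (k + 1) = dpCoeff 1 k + 3 * dpCoeff 2 k ∧
      dpCoeff 3 (k + 1) = dpCoeff 1 k + dpCoeff 2 k + 4 * dpCoeff 3 k ∧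
      ∀ h : ℕ, h > 3 →
        dpCoeff h (k + 1) = (h - 2 : ℤ) * dpCoeff (h - 1) k + (h + 1 : ℤ) * dpCoeff h k := by
  constructor
  · refine ⟨by simp [dpCoeff], by simp [dpCoeff], ?_, ?_⟩
    · simp [dpCoeff, Finset.sum_range_succ]
    · intro h hh
      obtain ⟨m, rfl⟩ : ∃ m, h = m + 4 := ⟨h - 4, by omega⟩
      rw [dpCoeff_big]
      rw [show (1:ℕ) = 0 + 1 from rfl, key]
      rw [alt, alt]
      ring
  · intro k hk
    refine ⟨?_, ?_, ?_, ?_⟩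
    · simp [dpCoeff]; ring
    · simp [dpCoeff]; ring
    · simp [dpCoeff, Finset.sum_range_succ]; ring
    · intro h hh
      obtain ⟨m, rfl⟩ : ∃ m, h = m + 4 := ⟨h - 4, by omega⟩
      rw [dpCoeff_big, key]
      have h1 : (m + 4 - 1) = m + 3 := by omega
      rw [h1, dpCoeff_mid, dpCoeff_big]
      push_cast
      have e : ((m:ℤ) + 5 - 1) = (m:ℤ) + 4 := by ring
      rw [e]
      ring
end
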